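/- arXiv:1807.09604 — 2 statements merged into one kernel-verified Lean document; each statement's English description precedes it below -/
import Mathlib

section
/- Let 𝒬 be a finite set, let 0 < p_1,…,p_m < ∞ with P := ∑_{j=1}^m p_j ≥ 1, let G : 𝒬 → [0,∞), let B_1,…,B_m > 0, and let 0 < C_1, C_2 < ∞. Then the estimate ∑_{Q ∈ 𝒬} G(Q) ≤ C_1^P C_2^P ∏_{j=1}^m B_j^{p_j} holds if and only if the following holds: for every function M : 𝒬 → [0,∞) with ∑_{Q ∈ 𝒬} M(Q) = 1 there exist functions S_1,…,S_m : 𝒬 → [0,∞) such that G(Q) M(Q)^{P-1} ≤ C_1^P ∏_{j=1}^m S_j(Q)^{p_j} for every Q ∈ 𝒬, and ∑_{Q ∈ 𝒬} S_j(Q) ≤ C_2 B_j for every j. -/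
open Finset

private lemma md_prod_mul_rpow {m : ℕ} (p : Fin m → ℝ) (hp : ∀ j, 0 ≤ p j)
    (c : Fin m → ℝ) (hc : ∀ j, 0 ≤ c j) (t : ℝ) (ht : 0 ≤ t) :
    ∏ j, (c j * t) ^ p j = (∏ j, c j ^ p j) * t ^ (∑ j, p j) := by
  rw [Real.rpow_sum_of_nonneg ht (fun j _ => hp j), ← Finset.prod_mul_distrib]
  exact Finset.prod_congr rfl fun j _ => Real.mul_rpow (hc j) ht

private lemma md_prod_const_mul {m : ℕ} (p : Fin m → ℝ) (hp : ∀ j, 0 ≤ p j)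
    (c : ℝ) (hc : 0 ≤ c) (B : Fin m → ℝ) (hB : ∀ j, 0 ≤ B j) :
    ∏ j, (c * B j) ^ p j = c ^ (∑ j, p j) * ∏ j, B j ^ p j := by
  rw [Real.rpow_sum_of_nonneg hc (fun j _ => hp j), ← Finset.prod_mul_distrib]
  exact Finset.prod_congr rfl fun j _ => Real.mul_rpow hc (hB j)

/-- **Multilinear duality** (Proposition 3.1 / `prop:multilinear-duality`):
the estimate `∑_Q G(Q) ≤ C₁^P C₂^P ∏_j B_j^{p_j}` is equivalent to the
existence, for every probability weight `M`, of factorizing functions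
`S_1, …, S_m` with `G(Q) M(Q)^{P-1} ≤ C₁^P ∏_j S_j(Q)^{p_j}` and
`∑_Q S_j(Q) ≤ C₂ B_j`. -/
theorem multilinear_duality {ι : Type*} [Fintype ι] (m : ℕ)
    (p : Fin m → ℝ) (hp : ∀ j, 0 < p j) (P : ℝ) (hP : P = ∑ j, p j) (hP1 : 1 ≤ P)
    (G : ι → ℝ) (hG : ∀ Q, 0 ≤ G Q)
    (B : Fin m → ℝ) (hB : ∀ j, 0 < B j)
    (C₁ C₂ : ℝ) (hC₁ : 0 < C₁) (hC₂ : 0 < C₂) :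
    (∑ Q, G Q ≤ C₁ ^ P * C₂ ^ P * ∏ j, B j ^ p j) ↔
      (∀ M : ι → ℝ, (∀ Q, 0 ≤ M Q) → (∑ Q, M Q) = 1 →
        ∃ S : Fin m → ι → ℝ,
          (∀ j Q, 0 ≤ S j Q) ∧
          (∀ Q, G Q * M Q ^ (P - 1) ≤ C₁ ^ P * ∏ j, S j Q ^ p j) ∧
          (∀ j, ∑ Q, S j Q ≤ C₂ * B j)) := by
  have hPpos : (0:ℝ) < P := lt_of_lt_of_le one_pos hP1
  have hPne : P ≠ 0 := ne_of_gt hPpos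
  have hpw : ∑ j, p j / P = 1 := by
    rw [← Finset.sum_div, ← hP, div_self hPne]
  have hinv : ∀ x : ℝ, 0 ≤ x → (x ^ (1 / P)) ^ P = x := fun x hx => by
    rw [← Real.rpow_mul hx, one_div, inv_mul_cancel₀ hPne, Real.rpow_one]
  constructor
  · -- forward direction
    intro h M hM hM1
    set T := ∑ Q, G Q with hTdef
    by_cases hT : T = 0
    · refine ⟨fun _ _ => 0, fun _ _ => le_rfl, fun Q => ?_, fun j => ?_⟩
      · have hGQ : G Q = 0 :=
          (Finset.sum_eq_zero_iff_of_nonneg (fun Q _ => hG Q)).1 hT Q (Finset.mem_univ Q)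
        rw [hGQ, zero_mul]
        exact mul_nonneg (Real.rpow_nonneg hC₁.le _)
          (Finset.prod_nonneg fun j _ => Real.rpow_nonneg le_rfl _)
      · simp only [Finset.sum_const_zero]
        exact mul_nonneg hC₂.le (hB j).le
    · have hTpos : 0 < T :=
        lt_of_le_of_ne (Finset.sum_nonneg fun Q _ => hG Q) (Ne.symm hT)
      refine ⟨fun j Q => C₂ * B j * (G Q * M Q ^ (P - 1) / T) ^ (1 / P),
        fun j Q => mul_nonneg (mul_nonneg hC₂.le (hB j).le)
          (Real.rpow_nonneg (div_nonneg (mul_nonneg (hG Q) (Real.rpow_nonneg (hM Q) _))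
            hTpos.le) _), ?_, ?_⟩
      · intro Q
        have hMP : 0 ≤ M Q ^ (P - 1) := Real.rpow_nonneg (hM Q) _
        have htnn : (0:ℝ) ≤ G Q * M Q ^ (P - 1) / T := div_nonneg (mul_nonneg (hG Q) hMP) hTpos.le
        have key : C₁ ^ P * ∏ j, (C₂ * B j * (G Q * M Q ^ (P - 1) / T) ^ (1 / P)) ^ p j
            = (C₁ ^ P * C₂ ^ P * ∏ j, B j ^ p j) * (G Q * M Q ^ (P - 1) / T) := by
          rw [md_prod_mul_rpow p (fun j => (hp j).le) _
              (fun j => mul_nonneg hC₂.le (hB j).le) _ (Real.rpow_nonneg htnn _),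
            ← hP, hinv _ htnn,
            md_prod_const_mul p (fun j => (hp j).le) C₂ hC₂.le B (fun j => (hB j).le), ← hP]
          ring
        rw [key]
        calc G Q * M Q ^ (P - 1) = T * (G Q * M Q ^ (P - 1) / T) := by
              field_simp
          _ ≤ (C₁ ^ P * C₂ ^ P * ∏ j, B j ^ p j) * (G Q * M Q ^ (P - 1) / T) :=
              mul_le_mul_of_nonneg_right h htnn
      · intro j
        have hsum : ∑ Q, (G Q * M Q ^ (P - 1) / T) ^ (1 / P) ≤ 1 := by
          have hpt : ∀ Q, (G Q * M Q ^ (P - 1) / T) ^ (1 / P)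
              ≤ (1 / P) * (G Q / T) + ((P - 1) / P) * M Q := by
            intro Q
            have e1 : (G Q * M Q ^ (P - 1) / T) ^ (1 / P)
                = (G Q / T) ^ (1 / P) * M Q ^ ((P - 1) / P) := by
              rw [show G Q * M Q ^ (P - 1) / T = (G Q / T) * M Q ^ (P - 1) from by ring,
                Real.mul_rpow (div_nonneg (hG Q) hTpos.le) (Real.rpow_nonneg (hM Q) _),
                ← Real.rpow_mul (hM Q), mul_one_div]
            rw [e1]
            exact Real.geom_mean_le_arith_mean2_weighted (by positivity)
              (div_nonneg (by linarith) hPpos.le) (div_nonneg (hG Q) hTpos.le) (hM Q)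
              (by rw [← add_div, show (1:ℝ) + (P - 1) = P from by ring, div_self hPne])
          calc ∑ Q, (G Q * M Q ^ (P - 1) / T) ^ (1 / P)
              ≤ ∑ Q, ((1 / P) * (G Q / T) + ((P - 1) / P) * M Q) :=
                Finset.sum_le_sum fun Q _ => hpt Q
            _ = (1 / P) * (T / T) + ((P - 1) / P) * (∑ Q, M Q) := by
                rw [Finset.sum_add_distrib, ← Finset.mul_sum, ← Finset.mul_sum,
                  ← Finset.sum_div, ← hTdef]
            _ = 1 := by
                rw [hM1, div_self hT, mul_one, mul_one, ← add_div,
                  show (1:ℝ) + (P - 1) = P from by ring, div_self hPne]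
        calc ∑ Q, C₂ * B j * (G Q * M Q ^ (P - 1) / T) ^ (1 / P)
            = C₂ * B j * ∑ Q, (G Q * M Q ^ (P - 1) / T) ^ (1 / P) := by
              rw [Finset.mul_sum]
          _ ≤ C₂ * B j * 1 := mul_le_mul_of_nonneg_left hsum (mul_nonneg hC₂.le (hB j).le)
          _ = C₂ * B j := mul_one _
  · -- reverse direction
    intro h
    set T := ∑ Q, G Q with hTdef
    by_cases hT : T = 0
    · rw [hT]
      exact mul_nonneg (mul_nonneg (Real.rpow_nonneg hC₁.le _) (Real.rpow_nonneg hC₂.le _))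
        (Finset.prod_nonneg fun j _ => Real.rpow_nonneg (hB j).le _)
    · have hTpos : 0 < T :=
        lt_of_le_of_ne (Finset.sum_nonneg fun Q _ => hG Q) (Ne.symm hT)
      obtain ⟨S, hS0, hS1, hS2⟩ := h (fun Q => G Q / T)
        (fun Q => div_nonneg (hG Q) hTpos.le)
        (by rw [← Finset.sum_div, ← hTdef, div_self hT])
      have key : ∀ Q, G Q / T ^ ((P - 1) / P) ≤ C₁ * ∏ j, S j Q ^ (p j / P) := by
        intro Q
        have e0 : G Q * (G Q / T) ^ (P - 1) = G Q ^ P / T ^ (P - 1) := by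
          rw [Real.div_rpow (hG Q) hTpos.le, ← mul_div_assoc]
          congr 1
          nth_rewrite 1 [← Real.rpow_one (G Q)]
          rw [← Real.rpow_add' (hG Q)
            (show (1:ℝ) + (P - 1) ≠ 0 from by rw [show (1:ℝ) + (P - 1) = P from by ring]; exact hPne),
            show (1:ℝ) + (P - 1) = P from by ring]
        have hL : (G Q * (G Q / T) ^ (P - 1)) ^ (1 / P) = G Q / T ^ ((P - 1) / P) := by
          rw [e0, Real.div_rpow (Real.rpow_nonneg (hG Q) _) (Real.rpow_nonneg hTpos.le _),
            ← Real.rpow_mul (hG Q), ← Real.rpow_mul hTpos.le, mul_one_div, mul_one_div,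
            div_self hPne, Real.rpow_one]
        have hR : (C₁ ^ P * ∏ j, S j Q ^ p j) ^ (1 / P) = C₁ * ∏ j, S j Q ^ (p j / P) := by
          rw [Real.mul_rpow (Real.rpow_nonneg hC₁.le _)
              (Finset.prod_nonneg fun j _ => Real.rpow_nonneg (hS0 j Q) _),
            ← Real.rpow_mul hC₁.le, mul_one_div, div_self hPne, Real.rpow_one,
            ← Real.finset_prod_rpow _ _ (fun j _ => Real.rpow_nonneg (hS0 j Q) _)]
          congr 1
          exact Finset.prod_congr rfl fun j _ => by
            rw [← Real.rpow_mul (hS0 j Q), mul_one_div]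
        calc G Q / T ^ ((P - 1) / P) = (G Q * (G Q / T) ^ (P - 1)) ^ (1 / P) := hL.symm
          _ ≤ (C₁ ^ P * ∏ j, S j Q ^ p j) ^ (1 / P) :=
              Real.rpow_le_rpow
                (mul_nonneg (hG Q) (Real.rpow_nonneg (div_nonneg (hG Q) hTpos.le) _))
                (hS1 Q) (by positivity)
          _ = C₁ * ∏ j, S j Q ^ (p j / P) := hR
      have amgm : ∀ Q, ∏ j, S j Q ^ (p j / P)
          ≤ (∏ j, (C₂ * B j) ^ (p j / P)) * ∑ j, (p j / P) * (S j Q / (C₂ * B j)) := by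
        intro Q
        have e : ∏ j, S j Q ^ (p j / P)
            = (∏ j, (C₂ * B j) ^ (p j / P)) * ∏ j, (S j Q / (C₂ * B j)) ^ (p j / P) := by
          rw [← Finset.prod_mul_distrib]
          refine Finset.prod_congr rfl fun j _ => ?_
          rw [← Real.mul_rpow (mul_nonneg hC₂.le (hB j).le)
              (div_nonneg (hS0 j Q) (mul_nonneg hC₂.le (hB j).le)),
            mul_comm (C₂ * B j), div_mul_cancel₀ _ (ne_of_gt (mul_pos hC₂ (hB j)))]
        rw [e]
        refine mul_le_mul_of_nonneg_left ?_
          (Finset.prod_nonneg fun j _ => Real.rpow_nonneg (mul_nonneg hC₂.le (hB j).le) _)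
        exact Real.geom_mean_le_arith_mean_weighted _ _ _
          (fun j _ => div_nonneg (hp j).le hPpos.le) hpw
          (fun j _ => div_nonneg (hS0 j Q) (mul_nonneg hC₂.le (hB j).le))
      have swap : ∑ Q, ∑ j, (p j / P) * (S j Q / (C₂ * B j))
          = ∑ j, (p j / P) * ((∑ Q, S j Q) / (C₂ * B j)) := by
        rw [Finset.sum_comm]
        exact Finset.sum_congr rfl fun j _ => by
          rw [← Finset.mul_sum, ← Finset.sum_div]
      have bnd : ∑ j, (p j / P) * ((∑ Q, S j Q) / (C₂ * B j)) ≤ 1 := by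
        calc ∑ j, (p j / P) * ((∑ Q, S j Q) / (C₂ * B j)) ≤ ∑ j, (p j / P) * 1 :=
            Finset.sum_le_sum fun j _ =>
              mul_le_mul_of_nonneg_left ((div_le_one (mul_pos hC₂ (hB j))).2 (hS2 j))
                (div_nonneg (hp j).le hPpos.le)
          _ = 1 := by simpa using hpw
      have prodc : ∏ j, (C₂ * B j) ^ (p j / P) = C₂ * ∏ j, B j ^ (p j / P) := by
        rw [md_prod_const_mul (fun j => p j / P)
          (fun j => div_nonneg (hp j).le hPpos.le) C₂ hC₂.le B (fun j => (hB j).le),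
          hpw, Real.rpow_one]
      have main : T ^ (1 / P) ≤ C₁ * C₂ * ∏ j, B j ^ (p j / P) := by
        have sum1 : ∑ Q, (G Q / T ^ ((P - 1) / P)) = T ^ (1 / P) := by
          rw [← Finset.sum_div, ← hTdef,
            div_eq_iff (ne_of_gt (Real.rpow_pos_of_pos hTpos _)),
            ← Real.rpow_add hTpos, ← add_div,
            show (1:ℝ) + (P - 1) = P from by ring, div_self hPne, Real.rpow_one]
        calc T ^ (1 / P) = ∑ Q, (G Q / T ^ ((P - 1) / P)) := sum1.symm
          _ ≤ ∑ Q, (C₁ * ∏ j, S j Q ^ (p j / P)) := Finset.sum_le_sum fun Q _ => key Q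
          _ ≤ ∑ Q, (C₁ * ((∏ j, (C₂ * B j) ^ (p j / P))
                * ∑ j, (p j / P) * (S j Q / (C₂ * B j)))) :=
              Finset.sum_le_sum fun Q _ => mul_le_mul_of_nonneg_left (amgm Q) hC₁.le
          _ = C₁ * (∏ j, (C₂ * B j) ^ (p j / P))
                * ∑ Q, ∑ j, (p j / P) * (S j Q / (C₂ * B j)) := by
              rw [Finset.mul_sum]
              exact Finset.sum_congr rfl fun Q _ => by ring
          _ = C₁ * (∏ j, (C₂ * B j) ^ (p j / P))
                * ∑ j, (p j / P) * ((∑ Q, S j Q) / (C₂ * B j)) := by rw [swap]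
          _ ≤ C₁ * (∏ j, (C₂ * B j) ^ (p j / P)) * 1 := by
              refine mul_le_mul_of_nonneg_left bnd ?_
              exact mul_nonneg hC₁.le
                (Finset.prod_nonneg fun j _ => Real.rpow_nonneg (mul_nonneg hC₂.le (hB j).le) _)
          _ = C₁ * C₂ * ∏ j, B j ^ (p j / P) := by rw [prodc, mul_one]; ring
      have final := Real.rpow_le_rpow (Real.rpow_nonneg hTpos.le _) main hPpos.le
      have rhs : (C₁ * C₂ * ∏ j, B j ^ (p j / P)) ^ P
          = C₁ ^ P * C₂ ^ P * ∏ j, B j ^ p j := by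
        rw [Real.mul_rpow (mul_nonneg hC₁.le hC₂.le)
            (Finset.prod_nonneg fun j _ => Real.rpow_nonneg (hB j).le _),
          Real.mul_rpow hC₁.le hC₂.le,
          ← Real.finset_prod_rpow _ _ (fun j _ => Real.rpow_nonneg (hB j).le _)]
        congr 1
        exact Finset.prod_congr rfl fun j _ => by
          rw [← Real.rpow_mul (hB j).le, div_mul_cancel₀ _ hPne]
      rwa [hinv _ hTpos.le, rhs] at final
end

section
/- Let μ be a finite nonnegative Borel measure on ℝ^n with finite first moment ∫ |w| dμ(w) < ∞, and suppose that the set 𝔹_μ := {v ∈ ℝ^n : ∫ |⟨v,w⟩| dμ(w) ≤ 1} is bounded. Then ( ∫ ⋯ ∫ |det(w_1, …, w_n)| dμ(w_1) ⋯ dμ(w_n) ) · vol(𝔹_μ) ≥ c(n) for a constant c(n) > 0 depending only on n, where det(w_1,…,w_n) is the determinant of the matrix with columns w_1,…,w_n and vol denotes Lebesgue measure. -/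
open MeasureTheory
open scoped ENNReal

noncomputable section

abbrev Euc (n : ℕ) : Type := EuclideanSpace ℝ (Fin n)

/-- The unit ball `𝔹_μ = {v : 𝔰_μ(v) ≤ 1}` of the seminorm
`𝔰_μ(v) = ∫ |⟨v,w⟩| dμ(w)`. -/
def seminormBall {n : ℕ} (μ : Measure (Euc n)) : Set (Euc n) :=
  {v : Euc n | (∫ w, |(inner ℝ v w : ℝ)| ∂μ) ≤ 1}

set_option linter.unusedSectionVars false

open scoped RealInnerProductSpace Matrix

namespace WedgeProof


def sgn (t : ℝ) : ℝ := if t < 0 then -1 else if 0 < t then 1 else 0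

lemma sgn_mul_self (t : ℝ) : sgn t * t = |t| := by
  unfold sgn
  rcases lt_trichotomy t 0 with h | h | h
  · rw [if_pos h, abs_of_neg h]; ring
  · simp [h]
  · rw [if_neg (not_lt.2 h.le), if_pos h, abs_of_pos h]; ring

lemma abs_sgn_le (t : ℝ) : |sgn t| ≤ 1 := by
  unfold sgn
  rcases lt_trichotomy t 0 with h | h | h
  · simp [h]
  · simp [h]
  · rw [if_neg (not_lt.2 h.le), if_pos h]; simp

lemma measurable_sgn : Measurable sgn := by
  unfold sgn
  refine Measurable.ite ?_ measurable_const (Measurable.ite ?_ measurable_const measurable_const)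
  · exact measurableSet_lt measurable_id measurable_const
  · exact measurableSet_lt measurable_const measurable_id

section PiLemmas
variable {E : Type*} [MeasurableSpace E] (μ : Measure E) [SigmaFinite μ]

theorem integrable_pi_prod {n : ℕ} {f : Fin n → E → ℝ} (hf : ∀ i, Integrable (f i) μ) :
    Integrable (fun x : Fin n → E => ∏ i, f i (x i)) (Measure.pi fun _ => μ) := by
  letI : MeasureSpace E := ⟨μ⟩
  haveI : SigmaFinite (volume : Measure E) := ‹SigmaFinite μ›
  exact MeasureTheory.Integrable.fintype_prod (𝕜 := ℝ) hf

theorem integral_pi_prod {n : ℕ} (f : Fin n → E → ℝ) :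
    (∫ x : Fin n → E, ∏ i, f i (x i) ∂(Measure.pi fun _ => μ)) = ∏ i, ∫ x, f i x ∂μ := by
  letI : MeasureSpace E := ⟨μ⟩
  haveI : SigmaFinite (volume : Measure E) := ‹SigmaFinite μ›
  exact MeasureTheory.integral_fintype_prod_eq_prod (ι := Fin n) f

end PiLemmas

section Dete
variable {n : ℕ}

def dete (w : Fin n → Euc n) : ℝ := Matrix.det (Matrix.of fun i l => (w l) i)

lemma coord_eq_inner (x : Euc n) (j : Fin n) : x j = ⟪EuclideanSpace.single j (1:ℝ), x⟫ := by
  simp [EuclideanSpace.inner_single_left]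

lemma abs_coord_le (x : Euc n) (j : Fin n) : |x j| ≤ ‖x‖ := by
  rw [coord_eq_inner x j]
  calc |⟪EuclideanSpace.single j (1:ℝ), x⟫| ≤ ‖EuclideanSpace.single j (1:ℝ)‖ * ‖x‖ :=
        abs_real_inner_le_norm _ _
    _ = ‖x‖ := by rw [EuclideanSpace.norm_single]; simp

lemma cont_coord (j : Fin n) : Continuous (fun x : Euc n => x j) := by
  have : (fun x : Euc n => x j) = fun x => ⟪EuclideanSpace.single j (1:ℝ), x⟫ := by
    funext x; exact coord_eq_inner x j
  rw [this]
  exact continuous_const.inner continuous_id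

lemma cont_dete : Continuous (dete (n := n)) := by
  have : Continuous fun (w : Fin n → Euc n) => (Matrix.of fun i l => (w l) i) := by
    refine continuous_pi fun i => continuous_pi fun l => ?_
    exact (cont_coord i).comp (continuous_apply l)
  exact this.matrix_det

end Dete

section Dete2
variable {n : ℕ}

lemma matrix_update (w : Fin n → Euc n) (k : Fin n) (x : Euc n) :
    (Matrix.of fun i l => ((Function.update w k x) l) i)
      = (Matrix.of fun i l => (w l) i).updateCol k (fun i => x i) := by
  ext i l
  rw [Matrix.updateCol_apply]
  by_cases h : l = k <;> simp [h, Function.update_apply]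

lemma dete_update_add (w : Fin n → Euc n) (k : Fin n) (x y : Euc n) :
    dete (Function.update w k (x + y))
      = dete (Function.update w k x) + dete (Function.update w k y) := by
  unfold dete
  rw [matrix_update, matrix_update, matrix_update]
  exact Matrix.det_updateCol_add _ k (fun i => x i) (fun i => y i)

lemma dete_update_smul (w : Fin n → Euc n) (k : Fin n) (c : ℝ) (x : Euc n) :
    dete (Function.update w k (c • x)) = c * dete (Function.update w k x) := by
  unfold dete
  rw [matrix_update, matrix_update]
  exact Matrix.det_updateCol_smul _ k c (fun i => x i)

lemma dete_update_zero (w : Fin n → Euc n) (k : Fin n) :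
    dete (Function.update w k (0 : Euc n)) = 0 := by
  have h := dete_update_smul w k 0 (0 : Euc n)
  rw [zero_smul] at h
  rw [h, zero_mul]

lemma dete_update_sum {ι : Type*} (w : Fin n → Euc n) (k : Fin n) (t : Finset ι)
    (f : ι → Euc n) :
    dete (Function.update w k (∑ i ∈ t, f i)) = ∑ i ∈ t, dete (Function.update w k (f i)) := by
  classical
  induction t using Finset.induction_on with
  | empty => simpa using dete_update_zero w k
  | insert _ _ h ih =>
      rw [Finset.sum_insert h, dete_update_add, ih, Finset.sum_insert h]

lemma dete_update_eq_sum (w : Fin n → Euc n) (k : Fin n) (x : Euc n) :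
    dete (Function.update w k x)
      = ∑ j, x j * dete (Function.update w k (EuclideanSpace.single j (1:ℝ))) := by
  have hx : ∑ j, x j • (EuclideanSpace.single j (1:ℝ)) = x := by
    simpa [EuclideanSpace.basisFun_repr, EuclideanSpace.basisFun_apply]
      using (EuclideanSpace.basisFun (Fin n) ℝ).sum_repr x
  conv_lhs => rw [← hx]
  rw [dete_update_sum]
  exact Finset.sum_congr rfl fun j _ => dete_update_smul w k (x j) _


lemma abs_dete_le (x : Fin n → Euc n) : |dete x| ≤ ((Nat.factorial n : ℕ) : ℝ) * ∏ i, ‖x i‖ := by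
  unfold dete
  rw [Matrix.det_apply']
  calc |∑ σ : Equiv.Perm (Fin n), ((Equiv.Perm.sign σ : ℤ) : ℝ) * ∏ i, (x i) (σ i)|
      ≤ ∑ σ : Equiv.Perm (Fin n), |((Equiv.Perm.sign σ : ℤ) : ℝ) * ∏ i, (x i) (σ i)| :=
        Finset.abs_sum_le_sum_abs _ _
    _ ≤ ∑ _σ : Equiv.Perm (Fin n), ∏ i, ‖x i‖ := by
        refine Finset.sum_le_sum fun σ _ => ?_
        rw [abs_mul]
        have h1 : |((Equiv.Perm.sign σ : ℤ) : ℝ)| = 1 := by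
          rcases Int.units_eq_one_or (Equiv.Perm.sign σ) with h | h <;> simp [h]
        rw [h1, one_mul, Finset.abs_prod]
        refine Finset.prod_le_prod (fun i _ => abs_nonneg _) fun i _ => abs_coord_le (x i) (σ i)
    _ = ((Nat.factorial n : ℕ) : ℝ) * ∏ i, ‖x i‖ := by
        rw [Finset.sum_const, Finset.card_univ, Fintype.card_perm, Fintype.card_fin,
          nsmul_eq_mul]

end Dete2
section S
variable {n : ℕ} (μ : Measure (Euc n)) [IsFiniteMeasure μ]

def sN (v : Euc n) : ℝ := ∫ w, |(inner ℝ v w : ℝ)| ∂μ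

variable {μ}

lemma meas_inner (v : Euc n) : Measurable fun w : Euc n => (⟪v, w⟫ : ℝ) :=
  (continuous_const.inner continuous_id).measurable

lemma int_inner (hInt : Integrable (fun w : Euc n => ‖w‖) μ) (v : Euc n) :
    Integrable (fun w : Euc n => (⟪v, w⟫ : ℝ)) μ := by
  refine Integrable.mono' (hInt.const_mul ‖v‖) (meas_inner v).aestronglyMeasurable ?_
  filter_upwards with w
  simpa [Real.norm_eq_abs] using abs_real_inner_le_norm v w

lemma int_abs_inner (hInt : Integrable (fun w : Euc n => ‖w‖) μ) (v : Euc n) :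
    Integrable (fun w : Euc n => |(⟪v, w⟫ : ℝ)|) μ := (int_inner hInt v).abs

lemma sN_nonneg (v : Euc n) : 0 ≤ sN μ v :=
  integral_nonneg fun w => abs_nonneg _

lemma sN_zero : sN μ (0 : Euc n) = 0 := by
  unfold sN; simp

lemma sN_smul (c : ℝ) (v : Euc n) : sN μ (c • v) = |c| * sN μ v := by
  unfold sN
  rw [← integral_const_mul]
  congr 1; funext w
  rw [real_inner_smul_left, abs_mul]

lemma sN_add_le (hInt : Integrable (fun w : Euc n => ‖w‖) μ) (x y : Euc n) :
    sN μ (x + y) ≤ sN μ x + sN μ y := by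
  unfold sN
  rw [← integral_add (int_abs_inner hInt x) (int_abs_inner hInt y)]
  refine integral_mono (int_abs_inner hInt (x + y))
    ((int_abs_inner hInt x).add (int_abs_inner hInt y)) fun w => ?_
  simp only [inner_add_left]
  exact abs_add_le _ _

lemma sN_sum_le (hInt : Integrable (fun w : Euc n => ‖w‖) μ) {ι : Type*} (t : Finset ι)
    (f : ι → Euc n) : sN μ (∑ i ∈ t, f i) ≤ ∑ i ∈ t, sN μ (f i) := by
  classical
  induction t using Finset.induction_on with
  | empty => simp [sN_zero]
  | insert _ _ h ih =>
      rw [Finset.sum_insert h, Finset.sum_insert h]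
      exact le_trans (sN_add_le hInt _ _) (by linarith)

lemma sN_le (hInt : Integrable (fun w : Euc n => ‖w‖) μ) (v : Euc n) :
    sN μ v ≤ (∫ w, ‖w‖ ∂μ) * ‖v‖ := by
  unfold sN
  rw [mul_comm, ← integral_const_mul]
  refine integral_mono (int_abs_inner hInt v) (hInt.const_mul ‖v‖) fun w => ?_
  exact abs_real_inner_le_norm v w

lemma sN_continuous (hInt : Integrable (fun w : Euc n => ‖w‖) μ) :
    Continuous (sN μ) := by
  set M := ∫ w, ‖w‖ ∂μ with hM
  have hM0 : 0 ≤ M := integral_nonneg fun w => norm_nonneg _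
  have hlip : ∀ x y : Euc n, |sN μ x - sN μ y| ≤ M * ‖x - y‖ := by
    intro x y
    have h1 : ∀ a b : Euc n, sN μ a - sN μ b ≤ M * ‖a - b‖ := by
      intro a b
      have : sN μ a ≤ sN μ b + sN μ (a - b) := by
        have := sN_add_le hInt b (a - b)
        simpa using this
      have h2 := sN_le hInt (a - b)
      linarith
    rw [abs_sub_le_iff]
    constructor
    · exact h1 x y
    · rw [← norm_neg, neg_sub]; exact h1 y x
  refine (LipschitzWith.of_dist_le_mul (K := M.toNNReal) fun x y => ?_).continuous
  rw [Real.dist_eq, dist_eq_norm, Real.coe_toNNReal M hM0]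
  exact hlip x y

def zvec (μ : Measure (Euc n)) (u : Euc n) : Euc n := ∫ w, sgn (⟪u, w⟫ : ℝ) • w ∂μ

lemma int_z_integrand (hInt : Integrable (fun w : Euc n => ‖w‖) μ) (u : Euc n) :
    Integrable (fun w : Euc n => sgn (⟪u, w⟫ : ℝ) • w) μ := by
  refine Integrable.mono' hInt ?_ ?_
  · exact ((measurable_sgn.comp (meas_inner u)).smul measurable_id).aestronglyMeasurable
  · filter_upwards with w
    rw [norm_smul, Real.norm_eq_abs]
    calc |sgn ⟪u, w⟫| * ‖w‖ ≤ 1 * ‖w‖ :=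
          mul_le_mul_of_nonneg_right (abs_sgn_le _) (norm_nonneg _)
      _ = ‖w‖ := one_mul _

lemma z_inner (hInt : Integrable (fun w : Euc n => ‖w‖) μ) (u v : Euc n) :
    (⟪v, zvec μ u⟫ : ℝ) = ∫ w, sgn (⟪u, w⟫ : ℝ) * (⟪v, w⟫ : ℝ) ∂μ := by
  rw [zvec, ← integral_inner (int_z_integrand hInt u) v]
  congr 1; funext w
  rw [real_inner_smul_right]

lemma z_self (hInt : Integrable (fun w : Euc n => ‖w‖) μ) (u : Euc n) :
    (⟪u, zvec μ u⟫ : ℝ) = sN μ u := by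
  rw [z_inner hInt u u, sN]
  congr 1; funext w
  exact sgn_mul_self _

lemma z_dom (hInt : Integrable (fun w : Euc n => ‖w‖) μ) (u v : Euc n) :
    |(⟪v, zvec μ u⟫ : ℝ)| ≤ sN μ v := by
  rw [z_inner hInt u v]
  calc |∫ w, sgn (⟪u, w⟫ : ℝ) * (⟪v, w⟫ : ℝ) ∂μ|
      ≤ ∫ w, |sgn (⟪u, w⟫ : ℝ) * (⟪v, w⟫ : ℝ)| ∂μ := by
        simpa only [Real.norm_eq_abs] using
          norm_integral_le_integral_norm (fun w => sgn (⟪u, w⟫ : ℝ) * (⟪v, w⟫ : ℝ)) (μ := μ)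
    _ ≤ ∫ w, |(⟪v, w⟫ : ℝ)| ∂μ := by
        refine integral_mono ?_ (int_abs_inner hInt v) fun w => ?_
        · refine (int_abs_inner hInt v).mono'
            ((measurable_sgn.comp (meas_inner u)).mul (meas_inner v)).abs.aestronglyMeasurable ?_
          filter_upwards with w
          rw [Real.norm_eq_abs, abs_abs, abs_mul]
          calc |sgn ⟪u, w⟫| * |(⟪v, w⟫ : ℝ)| ≤ 1 * |(⟪v, w⟫ : ℝ)| :=
                mul_le_mul_of_nonneg_right (abs_sgn_le _) (abs_nonneg _)
            _ = |(⟪v, w⟫ : ℝ)| := one_mul _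
        · rw [abs_mul]
          calc |sgn ⟪u, w⟫| * |(⟪v, w⟫ : ℝ)| ≤ 1 * |(⟪v, w⟫ : ℝ)| :=
                mul_le_mul_of_nonneg_right (abs_sgn_le _) (abs_nonneg _)
            _ = |(⟪v, w⟫ : ℝ)| := one_mul _

lemma z_coord (hInt : Integrable (fun w : Euc n => ‖w‖) μ) (u : Euc n) (j : Fin n) :
    zvec μ u j = ∫ w, sgn (⟪u, w⟫ : ℝ) * w j ∂μ := by
  rw [coord_eq_inner (zvec μ u) j, z_inner hInt u]
  congr 1; funext w
  rw [← coord_eq_inner w j]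

end S

section A
variable {n : ℕ} {μ : Measure (Euc n)} [IsFiniteMeasure μ]

lemma int_sgn_coord (hInt : Integrable (fun w : Euc n => ‖w‖) μ) (u : Euc n) (j : Fin n) :
    Integrable (fun w : Euc n => sgn (⟪u, w⟫ : ℝ) * w j) μ := by
  refine Integrable.mono' hInt
    ((measurable_sgn.comp (meas_inner u)).mul (cont_coord j).measurable).aestronglyMeasurable ?_
  filter_upwards with w
  rw [Real.norm_eq_abs, abs_mul]
  calc |sgn ⟪u, w⟫| * |w j| ≤ 1 * ‖w‖ := by
        refine mul_le_mul (abs_sgn_le _) (abs_coord_le w j) (abs_nonneg _) zero_le_one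
    _ = ‖w‖ := one_mul _

lemma dete_integrable (hInt : Integrable (fun w : Euc n => ‖w‖) μ) :
    Integrable dete (Measure.pi fun _ : Fin n => μ) := by
  refine Integrable.mono' ((integrable_pi_prod μ (fun _ : Fin n => hInt)).const_mul
    ((Nat.factorial n : ℕ) : ℝ)) cont_dete.measurable.aestronglyMeasurable ?_
  filter_upwards with x
  rw [Real.norm_eq_abs]
  exact abs_dete_le x

lemma detz_le (hInt : Integrable (fun w : Euc n => ‖w‖) μ) (u : Fin n → Euc n) :
    |dete (fun l => zvec μ (u l))| ≤ ∫ x, |dete x| ∂(Measure.pi fun _ : Fin n => μ) := by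
  classical
  set Pi := Measure.pi fun _ : Fin n => μ with hPi
  have hint : ∀ σ : Equiv.Perm (Fin n),
      Integrable (fun x : Fin n → Euc n => ∏ i, (sgn (⟪u i, x i⟫ : ℝ) * (x i) (σ i))) Pi :=
    fun σ => integrable_pi_prod μ fun i => int_sgn_coord hInt (u i) (σ i)
  have hS : ∀ x : Fin n → Euc n, |∏ i, sgn (⟪u i, x i⟫ : ℝ)| ≤ 1 := by
    intro x
    rw [Finset.abs_prod]
    refine Finset.prod_le_one (fun i _ => abs_nonneg _) (fun i _ => abs_sgn_le _)
  have step1 : dete (fun l => zvec μ (u l))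
      = ∫ x, (∏ i, sgn (⟪u i, x i⟫ : ℝ)) * dete x ∂Pi := by
    unfold dete
    rw [Matrix.det_apply']
    have hz : ∀ σ : Equiv.Perm (Fin n),
        (∏ i, (zvec μ (u i)) (σ i))
          = ∫ x, ∏ i, (sgn (⟪u i, x i⟫ : ℝ) * (x i) (σ i)) ∂Pi := by
      intro σ
      rw [hPi, integral_pi_prod μ (fun i => fun w : Euc n => sgn (⟪u i, w⟫ : ℝ) * w (σ i))]
      exact Finset.prod_congr rfl fun i _ => z_coord hInt (u i) (σ i)
    calc ∑ σ : Equiv.Perm (Fin n), ((Equiv.Perm.sign σ : ℤ) : ℝ)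
            * ∏ i, (Matrix.of fun i l => (zvec μ (u l)) i) (σ i) i
        = ∑ σ : Equiv.Perm (Fin n), ((Equiv.Perm.sign σ : ℤ) : ℝ)
            * ∫ x, ∏ i, (sgn (⟪u i, x i⟫ : ℝ) * (x i) (σ i)) ∂Pi := by
          refine Finset.sum_congr rfl fun σ _ => ?_
          rw [← hz σ]
          rfl
      _ = ∑ σ : Equiv.Perm (Fin n),
            ∫ x, ((Equiv.Perm.sign σ : ℤ) : ℝ) * ∏ i, (sgn (⟪u i, x i⟫ : ℝ) * (x i) (σ i)) ∂Pi := by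
          exact Finset.sum_congr rfl fun σ _ => (integral_const_mul _ _).symm
      _ = ∫ x, ∑ σ : Equiv.Perm (Fin n),
            ((Equiv.Perm.sign σ : ℤ) : ℝ) * ∏ i, (sgn (⟪u i, x i⟫ : ℝ) * (x i) (σ i)) ∂Pi := by
          exact (integral_finset_sum _ (fun σ _ => (hint σ).const_mul _)).symm
      _ = ∫ x, (∏ i, sgn (⟪u i, x i⟫ : ℝ)) * dete x ∂Pi := by
          congr 1; funext x
          unfold dete
          rw [Matrix.det_apply', Finset.mul_sum]
          refine Finset.sum_congr rfl fun σ _ => ?_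
          rw [Finset.prod_mul_distrib]
          ring_nf
          rfl
  rw [step1]
  have hintf : Integrable (fun x : Fin n → Euc n =>
      (∏ i, sgn (⟪u i, x i⟫ : ℝ)) * dete x) Pi := by
    refine Integrable.mono' ((dete_integrable hInt).abs) ?_ ?_
    · refine AEStronglyMeasurable.mul ?_ cont_dete.measurable.aestronglyMeasurable
      refine Measurable.aestronglyMeasurable ?_
      exact Finset.measurable_prod _ fun i _ =>
        (measurable_sgn.comp ((meas_inner (u i)).comp (measurable_pi_apply i)))
    · filter_upwards with x
      rw [Real.norm_eq_abs, abs_mul]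
      calc |∏ i, sgn (⟪u i, x i⟫ : ℝ)| * |dete x| ≤ 1 * |dete x| :=
            mul_le_mul_of_nonneg_right (hS x) (abs_nonneg _)
        _ = |dete x| := one_mul _
      
  calc |∫ x, (∏ i, sgn (⟪u i, x i⟫ : ℝ)) * dete x ∂Pi|
      ≤ ∫ x, |(∏ i, sgn (⟪u i, x i⟫ : ℝ)) * dete x| ∂Pi := by
        simpa only [Real.norm_eq_abs] using norm_integral_le_integral_norm
          (μ := Pi) (fun x : Fin n → Euc n => (∏ i, sgn (⟪u i, x i⟫ : ℝ)) * dete x)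
    _ ≤ ∫ x, |dete x| ∂Pi := by
        refine integral_mono hintf.abs (dete_integrable hInt).abs fun x => ?_
        show |(∏ i, sgn (⟪u i, x i⟫ : ℝ)) * dete x| ≤ |dete x|
        rw [abs_mul]
        calc |∏ i, sgn (⟪u i, x i⟫ : ℝ)| * |dete x| ≤ 1 * |dete x| :=
              mul_le_mul_of_nonneg_right (hS x) (abs_nonneg _)
          _ = |dete x| := one_mul _

end A

section B
variable {n : ℕ} {μ : Measure (Euc n)} [IsFiniteMeasure μ]

lemma exists_z_tuple (hInt : Integrable (fun w : Euc n => ‖w‖) μ)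
    (y : Fin n → Euc n) (hy : ∀ (l : Fin n) (v : Euc n), |(⟪v, y l⟫ : ℝ)| ≤ sN μ v) :
    ∃ w : Fin n → Euc n, (∀ l, ∃ u, w l = zvec μ u) ∧ |dete y| ≤ |dete w| := by
  classical
  suffices h : ∀ k : ℕ, ∃ c : Fin n → Euc n,
      (∀ (l : Fin n) (v : Euc n), |(⟪v, c l⟫ : ℝ)| ≤ sN μ v) ∧
      (∀ l : Fin n, (l : ℕ) < k → ∃ u, c l = zvec μ u) ∧ |dete y| ≤ |dete c| by
    obtain ⟨c, _, h2, h3⟩ := h n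
    exact ⟨c, fun l => h2 l l.isLt, h3⟩
  intro k
  induction k with
  | zero => exact ⟨y, hy, fun l hl => absurd hl (Nat.not_lt_zero _), le_refl _⟩
  | succ k ih =>
    obtain ⟨c, hc1, hc2, hc3⟩ := ih
    by_cases hk : k < n
    · set kk : Fin n := ⟨k, hk⟩ with hkk
      set g : Euc n :=
        WithLp.toLp 2 (fun j => dete (Function.update c kk (EuclideanSpace.single j (1:ℝ))) : Fin n → ℝ)
        with hg
      have hrep : ∀ x : Euc n, dete (Function.update c kk x) = (⟪g, x⟫ : ℝ) := by
        intro x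
        rw [dete_update_eq_sum, PiLp.inner_apply]
        refine Finset.sum_congr rfl fun j _ => ?_
        simp only [RCLike.inner_apply, conj_trivial, hg]
      refine ⟨Function.update c kk (zvec μ g), ?_, ?_, ?_⟩
      · intro l v
        by_cases h : l = kk
        · rw [h, Function.update_self]
          exact z_dom hInt g v
        · rw [Function.update_of_ne h]
          exact hc1 l v
      · intro l hl
        by_cases h : l = kk
        · exact ⟨g, by rw [h, Function.update_self]⟩
        · have hlk : (l : ℕ) < k := by
            have : (l : ℕ) ≠ k := fun hc => h (Fin.ext (by rw [hc, hkk]))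
            omega
          obtain ⟨u, hu⟩ := hc2 l hlk
          exact ⟨u, by rw [Function.update_of_ne h, hu]⟩
      · calc |dete y| ≤ |dete c| := hc3
          _ = |(⟪g, c kk⟫ : ℝ)| := by rw [← hrep (c kk), Function.update_eq_self]
          _ ≤ sN μ g := hc1 kk g
          _ = (⟪g, zvec μ g⟫ : ℝ) := (z_self hInt g).symm
          _ ≤ |(⟪g, zvec μ g⟫ : ℝ)| := le_abs_self _
          _ = |dete (Function.update c kk (zvec μ g))| := by rw [hrep]
    · refine ⟨c, hc1, fun l _ => hc2 l (lt_of_lt_of_le l.isLt (not_lt.1 hk)), hc3⟩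

end B

end WedgeProof

open WedgeProof in
/-- **Wedge estimate** (Lemma 3.5 / `lem:wedge`, cf. Theorem 3.1 of
Bennett–Bez–Flock–Lee): for a finite measure `μ` with finite first moment and
bounded `𝔹_μ`, one has `1 ≲ |μ^{∧n}| · vol(𝔹_μ)`. -/
theorem wedge_power_volume_lower_bound (n : ℕ) :
    ∃ c : ℝ, 0 < c ∧
      ∀ (μ : Measure (Euc n)) [IsFiniteMeasure μ],
        Integrable (fun w : Euc n => ‖w‖) μ →
        Bornology.IsBounded (seminormBall μ) →
        c ≤ (∫ w : Fin n → Euc n, |Matrix.det (Matrix.of fun i l => (w l) i)|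
              ∂ Measure.pi fun _ => μ) * (volume (seminormBall μ)).toReal := by
  classical
  set r : ℝ := (Real.sqrt n + 1)⁻¹ with hr
  have hrpos : 0 < r := by
    rw [hr]
    have := Real.sqrt_nonneg (n : ℝ)
    positivity
  refine ⟨(volume (Metric.ball (0 : Euc n) r)).toReal, ?_, ?_⟩
  · exact ENNReal.toReal_pos (Metric.measure_ball_pos volume 0 hrpos).ne' (measure_ball_lt_top).ne
  intro μ _ hInt hbd
  set b0 : ℝ := (volume (Metric.ball (0 : Euc n) r)).toReal with hb0
  set M : ℝ := ∫ w, ‖w‖ ∂μ with hMdef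
  have hM0 : 0 ≤ M := integral_nonneg fun w => norm_nonneg _
  set K : Set (Euc n) := seminormBall μ with hK
  have hmemK : ∀ v : Euc n, v ∈ K ↔ sN μ v ≤ 1 := fun v => Iff.rfl
  -- K is compact
  have hKclosed : IsClosed K := by
    have : K = (sN μ) ⁻¹' (Set.Iic 1) := rfl
    rw [this]
    exact IsClosed.preimage (sN_continuous hInt) isClosed_Iic
  have hKcmp : IsCompact K := Metric.isCompact_of_isClosed_isBounded hKclosed hbd
  have h0K : (0 : Euc n) ∈ K := by rw [hmemK, sN_zero]; exact zero_le_one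
  -- sN is a norm
  have hnorm : ∀ v : Euc n, sN μ v = 0 → v = 0 := by
    intro v hv
    by_contra hvne
    obtain ⟨R, hR⟩ := isBounded_iff_forall_norm_le.mp hKcmp.isBounded
    have hR0 : 0 ≤ R := le_trans (norm_nonneg _) (hR 0 h0K)
    have hvnorm : 0 < ‖v‖ := norm_pos_iff.2 hvne
    set t : ℝ := (R + 1) / ‖v‖ with ht
    have htv : t • v ∈ K := by
      rw [hmemK, sN_smul, hv, mul_zero]; exact zero_le_one
    have := hR (t • v) htv
    rw [norm_smul, Real.norm_eq_abs, ht, abs_div, abs_of_nonneg (by linarith : (0:ℝ) ≤ R + 1),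
      abs_of_pos hvnorm, div_mul_cancel₀ _ hvnorm.ne'] at this
    linarith
  -- maximize |dete| on Kⁿ
  set S : Set (Fin n → Euc n) := Set.univ.pi (fun _ => K) with hS
  have hScmp : IsCompact S := isCompact_univ_pi fun _ => hKcmp
  have hSne : S.Nonempty := ⟨fun _ => 0, fun l _ => h0K⟩
  obtain ⟨v, hvS, hvmax⟩ := hScmp.exists_isMaxOn hSne (cont_dete.abs.continuousOn)
  set D : ℝ := |dete v| with hD
  have hvK : ∀ l, v l ∈ K := fun l => hvS l (Set.mem_univ l)
  -- D is positive
  have hDpos : 0 < D := by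
    set v0 : Fin n → Euc n := fun l => (M + 1)⁻¹ • EuclideanSpace.single l (1 : ℝ) with hv0
    have hv0S : v0 ∈ S := by
      intro l _
      rw [hmemK, hv0]
      simp only
      rw [sN_smul]
      have h1 : sN μ (EuclideanSpace.single l (1:ℝ)) ≤ M := by
        have := sN_le hInt (EuclideanSpace.single l (1:ℝ))
        rwa [EuclideanSpace.norm_single, norm_one, mul_one, ← hMdef] at this
      have h2 : |(M + 1)⁻¹| = (M + 1)⁻¹ := abs_of_pos (by positivity)
      rw [h2]
      rw [inv_mul_le_iff₀ (by positivity), mul_one]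
      have := sN_nonneg (μ := μ) (EuclideanSpace.single l (1:ℝ))
      linarith
    have hv0det : dete v0 = ((M + 1)⁻¹) ^ n := by
      rw [dete]
      have hmat : (Matrix.of fun i l => (v0 l) i)
          = (M + 1)⁻¹ • (1 : Matrix (Fin n) (Fin n) ℝ) := by
        ext i l
        simp [hv0, EuclideanSpace.single_apply, Matrix.one_apply, mul_ite]
      rw [hmat, Matrix.det_smul, Matrix.det_one, mul_one, Fintype.card_fin]
    have hle := hvmax hv0S
    have : |dete v0| = ((M + 1)⁻¹) ^ n := by
      rw [hv0det, abs_of_pos (by positivity)]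
    rw [hD]
    calc (0:ℝ) < ((M + 1)⁻¹) ^ n := by positivity
      _ = |dete v0| := this.symm
      _ ≤ |dete v| := hle
  -- matrix V and dual basis
  set V : Matrix (Fin n) (Fin n) ℝ := Matrix.of fun i l => (v l) i with hV
  have hdetV : V.det = dete v := rfl
  have hVne : V.det ≠ 0 := by
    rw [hdetV]
    intro h
    rw [hD, h, abs_zero] at hDpos
    exact lt_irrefl _ hDpos
  set fv : Fin n → Euc n := fun l => WithLp.toLp 2 (fun j => V⁻¹ l j : Fin n → ℝ) with hfv
  have hfl_inner : ∀ (l : Fin n) (x : Euc n), (⟪fv l, x⟫ : ℝ) = (V⁻¹ *ᵥ (fun j => x j)) l := by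
    intro l x
    simp [hfv, PiLp.inner_apply, RCLike.inner_apply, Matrix.mulVec, dotProduct]
    exact Finset.sum_congr rfl fun _ _ => mul_comm _ _
  have hcramer : ∀ bb : Fin n → ℝ, Matrix.cramer V bb = V.det • (V⁻¹ *ᵥ bb) := by
    intro bb
    have h := Matrix.mulVec_cramer V bb
    have h2 := congrArg (fun y => V⁻¹ *ᵥ y) h
    rwa [Matrix.mulVec_mulVec, Matrix.nonsing_inv_mul V (isUnit_iff_ne_zero.mpr hVne), Matrix.one_mulVec,
      Matrix.mulVec_smul] at h2
  have key : ∀ (l : Fin n) (x : Euc n),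
      dete (Function.update v l x) = V.det * (⟪fv l, x⟫ : ℝ) := by
    intro l x
    rw [dete, matrix_update, ← hV]
    have h1 : (V.updateCol l fun i => x i).det = Matrix.cramer V (fun i => x i) l := by
      rw [Matrix.cramer_apply]
    rw [h1, hcramer, Pi.smul_apply, smul_eq_mul, hfl_inner]
  have hf_bound : ∀ (l : Fin n) (x : Euc n), x ∈ K → |(⟪fv l, x⟫ : ℝ)| ≤ D⁻¹ * D := by
    intro l x hx
    have hupd : Function.update v l x ∈ S := by
      intro i _
      rcases eq_or_ne i l with h | h
      · rw [h, Function.update_self]; exact hx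
      · rw [Function.update_of_ne h]; exact hvK i
    have h1 : |dete (Function.update v l x)| ≤ D := hvmax hupd
    rw [key l x, abs_mul] at h1
    have h2 : |V.det| = D := by rw [hdetV, ← hD]
    rw [h2] at h1
    calc |(⟪fv l, x⟫ : ℝ)| = D⁻¹ * (D * |(⟪fv l, x⟫ : ℝ)|) := by
          field_simp
      _ ≤ D⁻¹ * D := by
          refine mul_le_mul_of_nonneg_left ?_ (by positivity)
          exact h1
  have hf_bound1 : ∀ (l : Fin n) (x : Euc n), x ∈ K → |(⟪fv l, x⟫ : ℝ)| ≤ 1 := by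
    intro l x hx
    have := hf_bound l x hx
    rwa [inv_mul_cancel₀ hDpos.ne'] at this
  have hfZ : ∀ (l : Fin n) (vv : Euc n), |(⟪vv, fv l⟫ : ℝ)| ≤ sN μ vv := by
    intro l vv
    rw [real_inner_comm]
    rcases eq_or_lt_of_le (sN_nonneg (μ := μ) vv) with h | h
    · have hvv : vv = 0 := hnorm vv h.symm
      rw [hvv, inner_zero_right, abs_zero]
      exact sN_nonneg _
    · set x : Euc n := (sN μ vv)⁻¹ • vv with hx
      have hxK : x ∈ K := by
        rw [hmemK, hx, sN_smul, abs_of_pos (by positivity), inv_mul_cancel₀ h.ne']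
      have h1 := hf_bound1 l x hxK
      rw [hx, real_inner_smul_right, abs_mul, abs_of_pos (by positivity : (0:ℝ) < (sN μ vv)⁻¹)]
        at h1
      calc |(⟪fv l, vv⟫ : ℝ)| = (sN μ vv) * ((sN μ vv)⁻¹ * |(⟪fv l, vv⟫ : ℝ)|) := by
            field_simp
        _ ≤ (sN μ vv) * 1 := mul_le_mul_of_nonneg_left h1 h.le
        _ = sN μ vv := mul_one _
  have hdetfv : |dete fv| = D⁻¹ := by
    have hmat : (Matrix.of fun i l => (fv l) i) = V⁻¹.transpose := by
      ext i l
      rfl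
    rw [dete, hmat, Matrix.det_transpose, Matrix.det_nonsing_inv, Ring.inverse_eq_inv',
      abs_inv, hdetV, ← hD]
  -- determinant integral lower bound
  set I : ℝ := ∫ x, |dete x| ∂(Measure.pi fun _ : Fin n => μ) with hI
  have hIge : D⁻¹ ≤ I := by
    obtain ⟨wz, hwz, hge⟩ := exists_z_tuple hInt fv hfZ
    set u : Fin n → Euc n := fun l => Classical.choose (hwz l) with hu
    have hwzu : wz = fun l => zvec μ (u l) := funext fun l => Classical.choose_spec (hwz l)
    calc D⁻¹ = |dete fv| := hdetfv.symm
      _ ≤ |dete wz| := hge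
      _ = |dete (fun l => zvec μ (u l))| := by rw [← hwzu]
      _ ≤ I := detz_le hInt u
  -- volume lower bound
  set T : Euc n →ₗ[ℝ] Euc n :=
    { toFun := fun x => ∑ l, (x l) • v l
      map_add' := by
        intro x y
        simp only [PiLp.add_apply, add_smul]
        rw [Finset.sum_add_distrib]
      map_smul' := by
        intro c x
        simp only [PiLp.smul_apply, smul_eq_mul, RingHom.id_apply, Finset.smul_sum, smul_smul] }
    with hT
  have hTdet : LinearMap.det T = V.det := by
    set bb := (EuclideanSpace.basisFun (Fin n) ℝ).toBasis with hbb
    rw [← LinearMap.det_toMatrix bb T]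
    congr 1
    ext i l
    rw [LinearMap.toMatrix_apply]
    have hbl : bb l = EuclideanSpace.single l (1:ℝ) := by
      rw [hbb, OrthonormalBasis.coe_toBasis, EuclideanSpace.basisFun_apply]
    have hTl : T (bb l) = v l := by
      rw [hbl, hT]
      simp only [LinearMap.coe_mk, AddHom.coe_mk]
      rw [Finset.sum_eq_single l]
      · rw [EuclideanSpace.single_apply, if_pos rfl, one_smul]
      · intro l' _ hl'
        rw [EuclideanSpace.single_apply, if_neg hl', zero_smul]
      · intro h; exact absurd (Finset.mem_univ l) h
    rw [hTl, hbb, OrthonormalBasis.coe_toBasis_repr_apply, EuclideanSpace.basisFun_repr]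
    rfl
  have hsum_abs : ∀ x : Euc n, (∑ l, |x l|) ≤ Real.sqrt n * ‖x‖ := by
    intro x
    set a : Euc n := WithLp.toLp 2 (fun l => |x l| : Fin n → ℝ) with ha
    set b1 : Euc n := WithLp.toLp 2 (fun _ => 1 : Fin n → ℝ) with hb1
    have h := real_inner_le_norm a b1
    have h1 : (⟪a, b1⟫ : ℝ) = ∑ l, |x l| := by
      simp [ha, hb1, PiLp.inner_apply, RCLike.inner_apply]
    have h2 : ‖a‖ = ‖x‖ := by
      rw [EuclideanSpace.norm_eq, EuclideanSpace.norm_eq]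
      congr 1
      refine Finset.sum_congr rfl fun l _ => ?_
      rw [ha]
      simp [Real.norm_eq_abs, abs_abs, sq_abs]
    have h3 : ‖b1‖ = Real.sqrt n := by
      rw [EuclideanSpace.norm_eq]
      simp [hb1]
    rw [h1, h2, h3] at h
    rw [mul_comm (Real.sqrt n) ‖x‖]
    exact h
  have himg : T '' Metric.ball 0 r ⊆ K := by
    rintro y ⟨x, hx, rfl⟩
    rw [Metric.mem_ball, dist_zero_right] at hx
    have hTx : T x = ∑ l, (x l) • v l := rfl
    rw [hmemK, hTx]
    calc sN μ (∑ l, (x l) • v l) ≤ ∑ l, sN μ ((x l) • v l) :=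
          sN_sum_le hInt Finset.univ _
      _ = ∑ l, |x l| * sN μ (v l) := Finset.sum_congr rfl fun l _ => sN_smul _ _
      _ ≤ ∑ l, |x l| := by
          refine Finset.sum_le_sum fun l _ => ?_
          calc |x l| * sN μ (v l) ≤ |x l| * 1 :=
                mul_le_mul_of_nonneg_left ((hmemK (v l)).mp (hvK l)) (abs_nonneg _)
            _ = |x l| := mul_one _
      _ ≤ Real.sqrt n * ‖x‖ := hsum_abs x
      _ ≤ Real.sqrt n * r :=
          mul_le_mul_of_nonneg_left hx.le (Real.sqrt_nonneg _)
      _ = Real.sqrt n / (Real.sqrt n + 1) := by rw [hr, div_eq_mul_inv]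
      _ ≤ 1 := by
          rw [div_le_one (by positivity)]
          linarith [Real.sqrt_nonneg (n : ℝ)]
  have himg_vol : volume (T '' Metric.ball (0 : Euc n) r)
      = ENNReal.ofReal D * volume (Metric.ball (0 : Euc n) r) := by
    rw [Measure.addHaar_image_linearMap, hTdet]
    rfl
  have hKvol_fin : volume K ≠ ⊤ := hKcmp.measure_lt_top.ne
  have hVK : D * b0 ≤ (volume K).toReal := by
    have h := measure_mono (μ := (volume : Measure (Euc n))) himg
    rw [himg_vol] at h
    have h2 := ENNReal.toReal_mono hKvol_fin h
    rwa [ENNReal.toReal_mul, ENNReal.toReal_ofReal hDpos.le, ← hb0] at h2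
  have hI0 : (0 : ℝ) ≤ I := le_trans (inv_nonneg.mpr hDpos.le) hIge
  have hfinal : b0 ≤ I * (volume K).toReal := by
    calc b0 = D⁻¹ * (D * b0) := by field_simp
      _ ≤ I * (volume K).toReal :=
          mul_le_mul hIge hVK (mul_nonneg hDpos.le ENNReal.toReal_nonneg) hI0
  exact hfinal

end
end
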